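/- Let k be an integer and define the raising operator R_k = (X - \tau)\partial_\tau - k acting on smooth functions f : H \to C, producing functions valued in Poly(X,1) (polynomials of degree at most 1 in X with coefficients smooth functions of \tau). Then for every positive integer d, the d-fold composition R_k^d := R_{k+d-1} \circ \cdots \circ R_k satisfies the closed formula R_k^d f = \sum_{j=0}^{d} \binom{d}{j} \frac{(k+d-1)!}{(k+j-1)!} (-1)^{d-j} (X - \tau)^j \partial_\tau^j f, valid whenever k \geq 1 (so that all factorials are defined). -/

import Mathlib

open Finset

/-- The raising operator `R_k = (X - τ)∂_τ - k`, acting on functions of a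
formal variable `X` and a variable `τ` on the upper half plane. -/
noncomputable def Rop (k : ℤ) (F : ℂ → ℂ → ℂ) : ℂ → ℂ → ℂ :=
  fun X τ => (X - τ) * deriv (fun s => F X s) τ - (k : ℂ) * F X τ

/-- The iterated raising operator `R_k^d = R_{k+d-1} ∘ ⋯ ∘ R_k`. -/
noncomputable def Riter (k : ℤ) : ℕ → (ℂ → ℂ → ℂ) → (ℂ → ℂ → ℂ)
  | 0, F => F
  | d + 1, F => Rop (k + d) (Riter k d F)

/-- Coefficients of the closed formula. -/
noncomputable def rcoef (k : ℤ) (d j : ℕ) : ℂ :=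
  (d.choose j : ℂ) * (∏ t ∈ Finset.Ico j d, ((k : ℂ) + t)) * (-1 : ℂ) ^ (d - j)

lemma rcoef_top (k : ℤ) (d : ℕ) : rcoef k d (d + 1) = 0 := by
  simp [rcoef, Nat.choose_succ_self]

lemma rcoef_rec (k : ℤ) (d j : ℕ) (hj : j ≤ d + 1) :
    rcoef k (d + 1) j
      = rcoef k d j * (-(j : ℂ) - ((k : ℂ) + d))
        + (if j = 0 then 0 else rcoef k d (j - 1)) := by
  rcases Nat.eq_or_lt_of_le hj with h | h
  · subst h
    simp [rcoef_top, rcoef, Nat.choose_succ_self]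
  rcases j with _ | m
  · -- j = 0
    simp only [rcoef, Nat.choose_zero_right, Nat.cast_one, one_mul, reduceIte,
      Nat.sub_zero, Nat.cast_zero, neg_zero, zero_sub, add_zero]
    rw [Finset.prod_Ico_succ_top (Nat.zero_le d), pow_succ]
    ring
  · -- j = m + 1, with m + 1 ≤ d
    have hm : m + 1 ≤ d := Nat.lt_succ_iff.mp h
    have hmd : m ≤ d := le_trans (Nat.le_succ m) hm
    simp only [rcoef, Nat.add_sub_cancel, if_neg (Nat.succ_ne_zero m)]
    have e1 : d + 1 - (m + 1) = (d - (m + 1)) + 1 := by omega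
    have e2 : d - m = (d - (m + 1)) + 1 := by omega
    rw [Finset.prod_Ico_succ_top hm, Finset.prod_eq_prod_Ico_succ_bot (Nat.lt_of_lt_of_le (Nat.lt_succ_self m) hm),
      Nat.choose_succ_succ, e1, e2, pow_succ]
    have hkey : (d.choose (m + 1) : ℂ) * ((m : ℂ) + 1) = (d.choose m : ℂ) * ((d : ℂ) - m) := by
      have := Nat.choose_succ_right_eq d m
      have h2 : ((d.choose (m + 1) * (m + 1) : ℕ) : ℂ) = ((d.choose m * (d - m) : ℕ) : ℂ) := by
        exact_mod_cast congrArg (Nat.cast : ℕ → ℂ) this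
      push_cast [Nat.cast_sub hmd] at h2
      linear_combination h2
    push_cast
    linear_combination ((-1 : ℂ)) ^ (d - (m + 1)) * (∏ t ∈ Finset.Ico (m + 1) d, ((k : ℂ) + t)) * hkey

lemma pow_pred_mul (w : ℂ) (j : ℕ) : w * ((j : ℂ) * w ^ (j - 1)) = (j : ℂ) * w ^ j := by
  cases j with
  | zero => simp
  | succ n => rw [Nat.add_sub_cancel, pow_succ]; push_cast; ring

theorem raising_operator_power_formula (k : ℤ) (hk : 1 ≤ k) (d : ℕ) (hd : 0 < d)
    (f : ℂ → ℂ) (hf : DifferentiableOn ℂ f {z : ℂ | 0 < z.im}) :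
    ∀ X τ : ℂ, 0 < τ.im →
      Riter k d (fun _ t => f t) X τ
        = ∑ j ∈ Finset.range (d + 1),
            (d.choose j : ℂ) * (∏ t ∈ Finset.Ico j d, ((k : ℂ) + t))
              * (-1 : ℂ) ^ (d - j) * (X - τ) ^ j * iteratedDeriv j f τ := by
  have hU : IsOpen {z : ℂ | 0 < z.im} := isOpen_lt continuous_const Complex.continuous_im
  have hA : ∀ j, AnalyticOnNhd ℂ (iteratedDeriv j f) {z : ℂ | 0 < z.im} := by
    intro j
    induction j with
    | zero => simpa [iteratedDeriv_zero] using hf.analyticOnNhd hU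
    | succ n ih => rw [iteratedDeriv_succ]; exact ih.deriv
  have hDiff : ∀ (j : ℕ) (τ : ℂ), 0 < τ.im → DifferentiableAt ℂ (iteratedDeriv j f) τ :=
    fun j τ hτ => (hA j τ hτ).differentiableAt
  have key : ∀ d : ℕ, ∀ X τ : ℂ, 0 < τ.im →
      Riter k d (fun _ t => f t) X τ
        = ∑ j ∈ Finset.range (d + 1), rcoef k d j * (X - τ) ^ j * iteratedDeriv j f τ := by
    intro d
    induction d with
    | zero => intro X τ hτ; simp [Riter, rcoef]
    | succ d ih =>
      intro X τ hτ
      -- differentiability of each summand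
      have hterm : ∀ (X : ℂ) (j : ℕ), j ∈ Finset.range (d + 1) →
          DifferentiableAt ℂ (fun s => rcoef k d j * (X - s) ^ j * iteratedDeriv j f s) τ := by
        intro X j _
        exact ((differentiableAt_const _).mul
          (((differentiableAt_const X).sub differentiableAt_fun_id).pow j)).mul (hDiff j τ hτ)
      -- eventual equality near τ
      have hev : (fun s => Riter k d (fun _ t => f t) X s)
          =ᶠ[nhds τ] (fun s => ∑ j ∈ Finset.range (d + 1),
            rcoef k d j * (X - s) ^ j * iteratedDeriv j f s) := by
        filter_upwards [hU.mem_nhds hτ] with s hs using ih X s hs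
      have hXd : HasDerivAt (fun s : ℂ => X - s) (-1 : ℂ) τ := (hasDerivAt_id τ).const_sub X
      have hderiv : deriv (fun s => Riter k d (fun _ t => f t) X s) τ
          = ∑ j ∈ Finset.range (d + 1), rcoef k d j *
              (-((j : ℂ) * (X - τ) ^ (j - 1)) * iteratedDeriv j f τ
                + (X - τ) ^ j * iteratedDeriv (j + 1) f τ) := by
        rw [hev.deriv_eq, deriv_fun_sum (hterm X)]
        refine Finset.sum_congr rfl fun j _ => ?_
        have h1 : HasDerivAt (fun s : ℂ => (X - s) ^ j)
            ((j : ℂ) * (X - τ) ^ (j - 1) * (-1)) τ := hXd.pow j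
        have h2 : HasDerivAt (fun s => (X - s) ^ j * iteratedDeriv j f s)
            ((j : ℂ) * (X - τ) ^ (j - 1) * (-1) * iteratedDeriv j f τ
              + (X - τ) ^ j * iteratedDeriv (j + 1) f τ) τ := by
          have := h1.mul ((hDiff j τ hτ).hasDerivAt)
          rwa [← iteratedDeriv_succ] at this
        have h4 : HasDerivAt (fun s => rcoef k d j * (X - s) ^ j * iteratedDeriv j f s)
            (rcoef k d j * ((j : ℂ) * (X - τ) ^ (j - 1) * (-1) * iteratedDeriv j f τ
              + (X - τ) ^ j * iteratedDeriv (j + 1) f τ)) τ := by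
          simpa [mul_assoc] using h2.const_mul (rcoef k d j)
        rw [h4.deriv]
        ring
      show (X - τ) * deriv (fun s => Riter k d (fun _ t => f t) X s) τ
          - ((k + (d : ℤ) : ℤ) : ℂ) * Riter k d (fun _ t => f t) X τ = _
      rw [hderiv, ih X τ hτ]
      have hK : ((k + (d : ℤ) : ℤ) : ℂ) = (k : ℂ) + d := by push_cast; ring
      rw [hK]
      -- expand and regroup
      rw [Finset.mul_sum, Finset.mul_sum, ← Finset.sum_sub_distrib]
      have step1 : ∀ j ∈ Finset.range (d + 1),
          (X - τ) * (rcoef k d j * (-((j : ℂ) * (X - τ) ^ (j - 1)) * iteratedDeriv j f τ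
              + (X - τ) ^ j * iteratedDeriv (j + 1) f τ))
            - ((k : ℂ) + d) * (rcoef k d j * (X - τ) ^ j * iteratedDeriv j f τ)
          = rcoef k d j * (-(j : ℂ) - ((k : ℂ) + d)) * (X - τ) ^ j * iteratedDeriv j f τ
            + rcoef k d j * (X - τ) ^ (j + 1) * iteratedDeriv (j + 1) f τ := by
        intro j _
        have hp := pow_pred_mul (X - τ) j
        rw [pow_succ]
        ring_nf
        ring_nf at hp
        linear_combination (-(iteratedDeriv j f τ)) * rcoef k d j * hp
      rw [Finset.sum_congr rfl step1, Finset.sum_add_distrib]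
      -- first sum: extend to range (d+2)
      have hfirst : ∑ j ∈ Finset.range (d + 1),
            rcoef k d j * (-(j : ℂ) - ((k : ℂ) + d)) * (X - τ) ^ j * iteratedDeriv j f τ
          = ∑ j ∈ Finset.range (d + 2),
            rcoef k d j * (-(j : ℂ) - ((k : ℂ) + d)) * (X - τ) ^ j * iteratedDeriv j f τ := by
        rw [Finset.sum_range_succ (n := d + 1), rcoef_top]
        ring
      -- second sum: reindex
      have hsecond : ∑ j ∈ Finset.range (d + 1),
            rcoef k d j * (X - τ) ^ (j + 1) * iteratedDeriv (j + 1) f τ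
          = ∑ j ∈ Finset.range (d + 2),
            (if j = 0 then 0 else rcoef k d (j - 1)) * (X - τ) ^ j * iteratedDeriv j f τ := by
        rw [Finset.sum_range_succ' (fun j =>
          (if j = 0 then 0 else rcoef k d (j - 1)) * (X - τ) ^ j * iteratedDeriv j f τ) (d + 1)]
        simp only [Nat.add_sub_cancel, Nat.succ_ne_zero, if_false, if_pos rfl,
          Nat.cast_zero, zero_mul, add_zero, reduceIte]
      rw [hfirst, hsecond, ← Finset.sum_add_distrib]
      refine Finset.sum_congr rfl fun j hj => ?_
      rw [rcoef_rec k d j (Nat.lt_succ_iff.mp (Finset.mem_range.mp hj))]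
      ring
  intro X τ hτ
  rw [key d X τ hτ]
  exact Finset.sum_congr rfl fun j _ => by rw [rcoef]
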